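/- For all integers m ≥ 0 and n ≥ 0, the rational function e_m(v) is regular at v = 0 and its n-th Taylor coefficient at v = 0 equals (n!·Γ(n+w)/Γ(w)) times the coefficient of u^m in φ_n(u). Equivalently, the double series identity ∑_{n≥0} (n!·Γ(n+w)/Γ(w))·φ_n(u)·v^n = ∑_{m≥0} e_m(v)·u^m holds coefficientwise. -/

import Mathlib

open Polynomial

noncomputable section

/-- Derivative of a rational function. -/
def ratDeriv (f : RatFunc ℚ) : RatFunc ℚ :=
  RatFunc.mk (Polynomial.derivative f.num * f.denom - f.num * Polynomial.derivative f.denom)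
    (f.denom ^ 2)

section Aux
open PowerSeries


abbrev LS := LaurentSeries ℚ

lemma RatFunc.coe_num_denom (f : RatFunc ℚ) :
    (f : LS) = ((f.num : ℚ⟦X⟧) : LS) / ((f.denom : ℚ⟦X⟧) : LS) := by
  rw [RatFunc.coe_coe, RatFunc.coe_coe, ← map_div₀]
  exact congrArg _ (RatFunc.num_div_denom f).symm

lemma RatFunc.coe_div (f g : RatFunc ℚ) : ((f / g : RatFunc ℚ) : LS) = (f : LS) / (g : LS) :=
  map_div₀ _ f g

lemma RatFunc.coe_mul (f g : RatFunc ℚ) : ((f * g : RatFunc ℚ) : LS) = (f : LS) * (g : LS) :=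
  map_mul _ f g

lemma RatFunc.coe_add (f g : RatFunc ℚ) : ((f + g : RatFunc ℚ) : LS) = (f : LS) + (g : LS) :=
  map_add _ f g

lemma RatFunc.coe_sub (f g : RatFunc ℚ) : ((f - g : RatFunc ℚ) : LS) = (f : LS) - (g : LS) :=
  map_sub _ f g

lemma RatFunc.coe_C (r : ℚ) : ((RatFunc.C r : RatFunc ℚ) : LS) = HahnSeries.C r := by
  have h := RatFunc.coe_coe (Polynomial.C r)
  rw [Polynomial.coe_C, HahnSeries.ofPowerSeries_C] at h
  rw [h]; exact congrArg _ (RatFunc.algebraMap_C r).symm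

lemma RatFunc.coe_smul (r : ℚ) (f : RatFunc ℚ) : ((r • f : RatFunc ℚ) : LS) = r • (f : LS) := by
  rw [RatFunc.smul_eq_C_mul, map_mul, RatFunc.coe_C, HahnSeries.C_mul_eq_smul]

lemma ps_coe_injective : Function.Injective ((↑) : ℚ⟦X⟧ → LS) :=
  HahnSeries.ofPowerSeries_injective

lemma ratDeriv_coe (f : RatFunc ℚ) (E : ℚ⟦X⟧) (h : (f : LS) = (E : LS)) :
    ((ratDeriv f : RatFunc ℚ) : LS) = ((PowerSeries.derivative ℚ E : ℚ⟦X⟧) : LS) := by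
  have hd0 : (f.denom : ℚ⟦X⟧) ≠ 0 := by
    simpa [Polynomial.coe_eq_zero_iff] using f.denom_ne_zero
  have hdL : ((f.denom : ℚ⟦X⟧) : LS) ≠ 0 := by
    intro hc; exact hd0 (ps_coe_injective (by simpa using hc))
  have hnum : (f.num : ℚ⟦X⟧) = E * (f.denom : ℚ⟦X⟧) := by
    apply ps_coe_injective
    have h2 := RatFunc.coe_num_denom f
    rw [h, eq_div_iff hdL] at h2
    simpa using h2.symm
  have key : ((Polynomial.derivative f.num * f.denom
        - f.num * Polynomial.derivative f.denom : ℚ[X]) : ℚ⟦X⟧)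
      = (PowerSeries.derivative ℚ E) * ((f.denom ^ 2 : ℚ[X]) : ℚ⟦X⟧) := by
    have hdn : PowerSeries.derivative ℚ (f.num : ℚ⟦X⟧)
        = ((Polynomial.derivative f.num : ℚ[X]) : ℚ⟦X⟧) := by
      simpa using PowerSeries.derivativeFun_coe f.num
    have hdd : PowerSeries.derivative ℚ (f.denom : ℚ⟦X⟧)
        = ((Polynomial.derivative f.denom : ℚ[X]) : ℚ⟦X⟧) := by
      simpa using PowerSeries.derivativeFun_coe f.denom
    have hprod := Derivation.leibniz (PowerSeries.derivative ℚ) E (f.denom : ℚ⟦X⟧)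
    push_cast
    rw [← hdn, ← hdd, hnum, hprod]
    simp only [smul_eq_mul]
    ring
  have halg : ∀ p : ℚ[X], ((algebraMap ℚ[X] (RatFunc ℚ) p : RatFunc ℚ) : LS)
      = ((p : ℚ⟦X⟧) : LS) := fun p => (RatFunc.coe_coe p).symm
  rw [ratDeriv, RatFunc.mk_eq_div, RatFunc.coe_div, halg, halg, key]
  push_cast
  rw [mul_div_assoc, div_self (by simpa using pow_ne_zero 2 hdL), mul_one]

lemma coeff_X_mul_deriv (F : ℚ⟦X⟧) (k : ℕ) :
    PowerSeries.coeff k (PowerSeries.X * PowerSeries.derivative ℚ F)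
      = k * PowerSeries.coeff k F := by
  cases k with
  | zero => simp [PowerSeries.coeff_zero_X_mul]
  | succ j =>
      rw [PowerSeries.coeff_succ_X_mul, PowerSeries.coeff_derivative]
      push_cast; ring

lemma coeff_X_shift (F : ℚ⟦X⟧) (k : ℕ) :
    PowerSeries.coeff k (PowerSeries.X * F)
      = if k = 0 then 0 else PowerSeries.coeff (k-1) F := by
  cases k with
  | zero => simp [PowerSeries.coeff_zero_X_mul]
  | succ j => simp [PowerSeries.coeff_succ_X_mul]

lemma step (q β γ δ : ℚ) (g f₀ : RatFunc ℚ) (E₀ : ℚ⟦X⟧) (h₀ : (f₀ : LS) = (E₀ : LS))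
    (heq : g / RatFunc.X - q • g + β • f₀ - RatFunc.X * ratDeriv f₀
        + γ • (RatFunc.X * ratDeriv (RatFunc.X * f₀))
        + (1/4 : ℚ) • (RatFunc.X * ratDeriv (RatFunc.X * ratDeriv (RatFunc.X * f₀)))
        = (RatFunc.C δ) / RatFunc.X) :
    ∃ E : ℚ⟦X⟧, (g : LS) = (E : LS) ∧ (PowerSeries.coeff 0 E = δ) ∧
      ∀ k : ℕ, PowerSeries.coeff (k+1) E
        = q * PowerSeries.coeff k E
          - (β * PowerSeries.coeff k E₀ - k * PowerSeries.coeff k E₀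
             + (γ * k + (k:ℚ)^2/4) *
               (if k = 0 then 0 else PowerSeries.coeff (k-1) E₀)) := by
  classical
  set D := PowerSeries.derivative ℚ with hD
  set A : ℚ⟦X⟧ := β • E₀ - PowerSeries.X * D E₀ + γ • (PowerSeries.X * D (PowerSeries.X * E₀))
      + (1/4 : ℚ) • (PowerSeries.X * D (PowerSeries.X * D (PowerSeries.X * E₀))) with hA
  have hX : ((RatFunc.X : RatFunc ℚ) : LS) = ((PowerSeries.X : ℚ⟦X⟧) : LS) := by
    rw [RatFunc.coe_X, HahnSeries.ofPowerSeries_X]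
  have hXf₀ : ((RatFunc.X * f₀ : RatFunc ℚ) : LS) = ((PowerSeries.X * E₀ : ℚ⟦X⟧) : LS) := by
    rw [RatFunc.coe_mul, hX, h₀, PowerSeries.coe_mul]
  have hd1 : ((ratDeriv (RatFunc.X * f₀) : RatFunc ℚ) : LS)
      = ((D (PowerSeries.X * E₀) : ℚ⟦X⟧) : LS) := ratDeriv_coe _ _ hXf₀
  have hXd1 : ((RatFunc.X * ratDeriv (RatFunc.X * f₀) : RatFunc ℚ) : LS)
      = ((PowerSeries.X * D (PowerSeries.X * E₀) : ℚ⟦X⟧) : LS) := by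
    rw [RatFunc.coe_mul, hX, hd1, PowerSeries.coe_mul]
  have hd2 : ((ratDeriv (RatFunc.X * ratDeriv (RatFunc.X * f₀)) : RatFunc ℚ) : LS)
      = ((D (PowerSeries.X * D (PowerSeries.X * E₀)) : ℚ⟦X⟧) : LS) := ratDeriv_coe _ _ hXd1
  have hd0 : ((ratDeriv f₀ : RatFunc ℚ) : LS) = ((D E₀ : ℚ⟦X⟧) : LS) := ratDeriv_coe _ _ h₀
  have hLX0 : ((PowerSeries.X : ℚ⟦X⟧) : LS) ≠ 0 := by
    intro hc; exact PowerSeries.X_ne_zero (ps_coe_injective (by simpa using hc))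
  have hL := congrArg (fun x : RatFunc ℚ => (x : LS)) heq
  simp only [RatFunc.coe_sub, RatFunc.coe_add, RatFunc.coe_div, RatFunc.coe_mul,
    RatFunc.coe_smul, RatFunc.coe_C, hX, hd0, hd1, hd2, hXd1, h₀] at hL
  set u : ℚ⟦X⟧ := 1 - PowerSeries.C q * PowerSeries.X with hu
  have hu0 : PowerSeries.constantCoeff u ≠ 0 := by simp [hu]
  have huL0 : ((u : ℚ⟦X⟧) : LS) ≠ 0 := by
    intro hc
    have : u = 0 := ps_coe_injective (by simpa using hc)
    exact hu0 (by simp [this])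
  have key : (g : LS) * ((u : ℚ⟦X⟧) : LS)
      = ((PowerSeries.C δ - PowerSeries.X * A : ℚ⟦X⟧) : LS) := by
    have h2 := congrArg (fun y : LS => y * ((PowerSeries.X : ℚ⟦X⟧) : LS)) hL
    simp only [sub_mul, add_mul, smul_mul_assoc, div_mul_cancel₀ _ hLX0, PowerSeries.coe_mul] at h2
    rw [hu, hA]
    simp only [PowerSeries.coe_sub, PowerSeries.coe_add, PowerSeries.coe_mul,
      PowerSeries.coe_one, PowerSeries.coe_smul, HahnSeries.ofPowerSeries_C]
    simp only [← HahnSeries.C_mul_eq_smul] at h2 ⊢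
    linear_combination h2
  have hEu : ((PowerSeries.C δ - PowerSeries.X * A) * u⁻¹) * u
      = PowerSeries.C δ - PowerSeries.X * A := by
    rw [mul_assoc, PowerSeries.inv_mul_cancel u hu0, mul_one]
  refine ⟨(PowerSeries.C δ - PowerSeries.X * A) * u⁻¹, ?_, ?_, ?_⟩
  · apply mul_right_cancel₀ huL0
    rw [key, ← PowerSeries.coe_mul, hEu]
  · have hcu : PowerSeries.constantCoeff u = 1 := by simp [hu]
    have hv : PowerSeries.constantCoeff ((PowerSeries.C δ - PowerSeries.X * A) * u⁻¹) = δ := by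
      rw [map_mul, PowerSeries.constantCoeff_inv, hcu, inv_one, mul_one, map_sub, map_mul]
      simp
    simpa [PowerSeries.coeff_zero_eq_constantCoeff] using hv
  · intro k
    have h1 := congrArg (PowerSeries.coeff (k+1)) hEu
    rw [hu] at h1
    have e1 : ((PowerSeries.C δ - PowerSeries.X * A) * u⁻¹)
          * (1 - PowerSeries.C q * PowerSeries.X)
        = ((PowerSeries.C δ - PowerSeries.X * A) * u⁻¹)
          - PowerSeries.C q * (PowerSeries.X * ((PowerSeries.C δ - PowerSeries.X * A) * u⁻¹)) := by
      ring
    rw [e1] at h1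
    rw [map_sub, map_sub, PowerSeries.coeff_C_mul, PowerSeries.coeff_succ_X_mul,
      PowerSeries.coeff_succ_X_mul, PowerSeries.coeff_C] at h1
    simp only [Nat.succ_ne_zero, if_false, zero_sub, sub_eq_iff_eq_add] at h1
    rw [h1]
    have hAk : PowerSeries.coeff k A
        = β * PowerSeries.coeff k E₀ - k * PowerSeries.coeff k E₀
          + (γ * k + (k:ℚ)^2/4) * (if k = 0 then 0 else PowerSeries.coeff (k-1) E₀) := by
      rw [hA]
      simp only [map_add, map_sub, PowerSeries.coeff_smul, smul_eq_mul, hD]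
      simp only [coeff_X_mul_deriv]
      simp only [coeff_X_shift]
      cases k with
      | zero => simp
      | succ j =>
          simp only [Nat.succ_ne_zero, if_false]
          push_cast; ring
    rw [hAk]; ring

lemma polyXshift (p : ℚ[X]) (m : ℕ) :
    (Polynomial.X * p).coeff m = if m = 0 then 0 else p.coeff (m-1) := by
  cases m with
  | zero => simp [Polynomial.mul_coeff_zero]
  | succ j => simp [Polynomial.coeff_X_mul]

lemma phi_coeff (a : ℕ) (w bq : ℚ) (φ : ℕ → ℚ[X])
    (hφrec : ∀ n : ℕ,
      (((n : ℚ) + 1) * ((n : ℚ) + w)) • φ (n + 1)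
        + (Polynomial.X ^ 2 - Polynomial.X) * Polynomial.derivative (φ n)
        - (Polynomial.C (a : ℚ) + ((n : ℚ) + bq) • Polynomial.X) * φ n
        + (1/4 : ℚ) • (Polynomial.X * (if n = 0 then 0 else φ (n - 1))) = 0)
    (k m : ℕ) :
    ((k:ℚ)+1) * ((k:ℚ)+w) * (φ (k+1)).coeff m
      = ((m:ℚ) + a) * (φ k).coeff m
        + ((k:ℚ) + bq - m + 1) * (if m = 0 then 0 else (φ k).coeff (m-1))
        - (1/4) * (if m = 0 then 0 else if k = 0 then (0:ℚ) else (φ (k-1)).coeff (m-1)) := by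
  classical
  have h0 := hφrec k
  rw [show (Polynomial.X^2 - Polynomial.X : ℚ[X]) * Polynomial.derivative (φ k)
      = Polynomial.X*(Polynomial.X*Polynomial.derivative (φ k))
        - Polynomial.X*Polynomial.derivative (φ k) by ring,
    show (Polynomial.C (a:ℚ) + ((k:ℚ)+bq) • Polynomial.X) * φ k
      = Polynomial.C (a:ℚ) * φ k + ((k:ℚ)+bq) • (Polynomial.X * φ k) by
        rw [add_mul, smul_mul_assoc]] at h0
  have h := congrArg (fun p : ℚ[X] => p.coeff m) h0
  simp only [Polynomial.coeff_add, Polynomial.coeff_sub, Polynomial.coeff_smul, smul_eq_mul,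
    Polynomial.coeff_zero, Polynomial.coeff_C_mul, polyXshift, Polynomial.coeff_derivative,
    apply_ite (fun p : ℚ[X] => p.coeff (m-1)), Polynomial.coeff_zero] at h
  cases m with
  | zero =>
      simp only [if_pos rfl] at h ⊢
      push_cast at h ⊢
      linarith
  | succ m' =>
      simp only [Nat.succ_ne_zero, if_false, Nat.add_sub_cancel] at h ⊢
      cases m' with
      | zero =>
          simp only [if_pos rfl] at h ⊢
          push_cast at h ⊢
          linarith
      | succ j =>
          simp only [Nat.succ_ne_zero, if_false, Nat.add_sub_cancel,
            Polynomial.coeff_derivative] at h ⊢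
          push_cast at h ⊢
          linarith

lemma gamma_fact (w : ℝ) (hw : 0 < w) (n : ℕ) :
    (n.factorial : ℝ) * Real.Gamma (n + w) / Real.Gamma w
      = ∏ k ∈ Finset.range n, ((k+1 : ℝ) * (k + w)) := by
  have hΓw : Real.Gamma w ≠ 0 := (Real.Gamma_pos_of_pos hw).ne'
  induction n with
  | zero => simp [hΓw]
  | succ n ih =>
      have hne : (n : ℝ) + w ≠ 0 := by positivity
      have hg : Real.Gamma ((n:ℝ) + w + 1) = ((n:ℝ)+w) * Real.Gamma ((n:ℝ)+w) :=
        Real.Gamma_add_one hne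
      rw [Finset.prod_range_succ, ← ih]
      have hc : ((n+1 : ℕ) : ℝ) + w = ((n:ℝ) + w) + 1 := by push_cast; ring
      rw [hc, hg, Nat.factorial_succ]
      field_simp
      push_cast
      ring

def Cw (w : ℚ) (n : ℕ) : ℚ := ∏ k ∈ Finset.range n, ((k+1:ℚ) * ((k:ℚ) + w))

lemma Cw_succ (w : ℚ) (k : ℕ) :
    Cw w (k+1) = Cw w k * (((k:ℚ)+1) * ((k:ℚ) + w)) := by
  rw [Cw, Cw, Finset.prod_range_succ]

lemma main_aux (a : ℕ) (w bq : ℚ) (φ : ℕ → ℚ[X]) (hφ0 : φ 0 = 1)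
    (hφrec : ∀ n : ℕ,
      (((n : ℚ) + 1) * ((n : ℚ) + w)) • φ (n + 1)
        + (Polynomial.X ^ 2 - Polynomial.X) * Polynomial.derivative (φ n)
        - (Polynomial.C (a : ℚ) + ((n : ℚ) + bq) • Polynomial.X) * φ n
        + (1/4 : ℚ) • (Polynomial.X * (if n = 0 then 0 else φ (n - 1))) = 0)
    (e : ℕ → RatFunc ℚ)
    (herec : ∀ m : ℕ,
      e m / RatFunc.X - ((m : ℚ) + a) • e m
        + ((m : ℚ) - 1 - bq) • (if m = 0 then 0 else e (m - 1))
        - RatFunc.X * ratDeriv (if m = 0 then 0 else e (m - 1))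
        + ((w - 1) / 4) •
            (RatFunc.X * ratDeriv (RatFunc.X * (if m = 0 then 0 else e (m - 1))))
        + (1/4 : ℚ) • (RatFunc.X * ratDeriv (RatFunc.X *
            ratDeriv (RatFunc.X * (if m = 0 then 0 else e (m - 1)))))
      = (if m = 0 then 1 else 0) / RatFunc.X) :
    ∀ m, ∃ E : ℚ⟦X⟧, ((e m : LS) = (E : LS)) ∧
      ∀ n, PowerSeries.coeff n E = Cw w n * (φ n).coeff m := by
  classical
  intro m
  induction m with
  | zero =>
      have h := herec 0
      rw [if_pos rfl, if_pos rfl] at h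
      obtain ⟨E, hE, h0, hrec⟩ := step ((0:ℚ)+a) ((0:ℚ)-1-bq) ((w-1)/4) 1 (e 0) 0 0
        (by simp) (by rw [map_one]; exact h)
      refine ⟨E, hE, ?_⟩
      intro n
      induction n with
      | zero => simpa [Cw, hφ0] using h0
      | succ k ihn =>
          have hp := phi_coeff a w bq φ hφrec k 0
          rw [if_pos rfl, if_pos rfl] at hp
          have hr := hrec k
          simp only [map_zero, mul_zero, zero_mul, sub_zero, add_zero, zero_add,
            ite_self, zero_sub, neg_zero] at hr
          rw [hr, ihn, Cw_succ]
          push_cast at hp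
          linear_combination (-Cw w k) * hp
  | succ m ihm =>
      obtain ⟨E₀, hE₀, hc₀⟩ := ihm
      have h := herec (m+1)
      rw [if_neg (Nat.succ_ne_zero m), if_neg (Nat.succ_ne_zero m)] at h
      simp only [Nat.add_sub_cancel] at h
      obtain ⟨E, hE, h0, hrec⟩ := step (((m:ℚ)+1)+a) (((m:ℚ)+1)-1-bq) ((w-1)/4) 0 (e (m+1))
        (e m) E₀ hE₀ (by rw [map_zero]; push_cast at h ⊢; exact h)
      refine ⟨E, hE, ?_⟩
      intro n
      induction n with
      | zero =>
          rw [h0, Cw]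
          simp [hφ0, Polynomial.coeff_one]
      | succ k ihn =>
          have hp := phi_coeff a w bq φ hφrec k (m+1)
          rw [if_neg (Nat.succ_ne_zero m), if_neg (Nat.succ_ne_zero m)] at hp
          simp only [Nat.add_sub_cancel] at hp
          have hr := hrec k
          rw [ihn, hc₀ k] at hr
          cases k with
          | zero =>
              rw [if_pos rfl] at hr
              rw [if_pos rfl] at hp
              rw [hr, Cw_succ w 0]
              push_cast at hp ⊢
              linear_combination (-Cw w 0) * hp
          | succ j =>
              rw [if_neg (Nat.succ_ne_zero j), Nat.add_sub_cancel, hc₀ j] at hr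
              rw [if_neg (Nat.succ_ne_zero j), Nat.add_sub_cancel] at hp
              rw [hr, Cw_succ w (j+1), Cw_succ w j]
              push_cast at hp ⊢
              linear_combination (-(Cw w j * (((j:ℚ)+1) * ((j:ℚ) + w)))) * hp
end Aux

/-- For all `m, n ≥ 0`: the rational function `e m` is regular at `v = 0` (its Laurent
expansion at `0` has no negative-index coefficients) and its `n`-th Taylor coefficient at
`v = 0` equals `n! Γ(n+w)/Γ(w)` times the coefficient of `u^m` in `φₙ(u)`; i.e. the identity
`∑_{n≥0} (n! Γ(n+w)/Γ(w)) φₙ(u) vⁿ = ∑_{m≥0} e_m(v) u^m` holds coefficientwise. -/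
theorem e_taylor_coeff
    (a b4 c4 : ℕ) (hw : 0 < 4 * a + b4 + c4)
    (φ : ℕ → Polynomial ℚ)
    (hφ0 : φ 0 = 1)
    (hφrec : ∀ n : ℕ,
      (((n : ℚ) + 1) * ((n : ℚ) + (2 * a + b4 / 2 + c4 / 2))) • φ (n + 1)
        + (X ^ 2 - X) * Polynomial.derivative (φ n)
        - (Polynomial.C (a : ℚ) + ((n : ℚ) + b4 / 4) • X) * φ n
        + (1/4 : ℚ) • (X * (if n = 0 then 0 else φ (n - 1))) = 0)
    (e : ℕ → RatFunc ℚ)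
    (herec : ∀ m : ℕ,
      e m / RatFunc.X - ((m : ℚ) + a) • e m
        + ((m : ℚ) - 1 - b4 / 4) • (if m = 0 then 0 else e (m - 1))
        - RatFunc.X * ratDeriv (if m = 0 then 0 else e (m - 1))
        + (((2 * (a : ℚ) + b4 / 2 + c4 / 2) - 1) / 4) •
            (RatFunc.X * ratDeriv (RatFunc.X * (if m = 0 then 0 else e (m - 1))))
        + (1/4 : ℚ) • (RatFunc.X * ratDeriv (RatFunc.X *
            ratDeriv (RatFunc.X * (if m = 0 then 0 else e (m - 1)))))
      = (if m = 0 then 1 else 0) / RatFunc.X)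
    (m : ℕ) :
    (∀ i : ℤ, i < 0 → ((e m : LaurentSeries ℚ)).coeff i = 0) ∧
    (∀ n : ℕ, (((e m : LaurentSeries ℚ)).coeff (n : ℤ) : ℝ)
        = (Nat.factorial n : ℝ) *
            Real.Gamma (n + (2 * a + b4 / 2 + c4 / 2 : ℝ)) /
            Real.Gamma (2 * a + b4 / 2 + c4 / 2 : ℝ) *
          ((φ n).coeff m : ℝ)) := by
  classical
  obtain ⟨E, hE, hco⟩ :=
    main_aux a (2*(a:ℚ) + b4/2 + c4/2) ((b4:ℚ)/4) φ hφ0 hφrec e herec m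
  have hwq : (0:ℚ) < 2*(a:ℚ) + b4/2 + c4/2 := by
    have h4 : (0:ℚ) < 4*(a:ℚ) + b4 + c4 := by exact_mod_cast hw
    have hb : (0:ℚ) ≤ (b4:ℚ) := Nat.cast_nonneg _
    have hc : (0:ℚ) ≤ (c4:ℚ) := Nat.cast_nonneg _
    linarith
  constructor
  · intro i hi
    rw [hE, PowerSeries.coeff_coe]
    simp [hi]
  · intro n
    have h1 : ((e m : LaurentSeries ℚ)).coeff (n : ℤ) = PowerSeries.coeff n E := by
      rw [hE, PowerSeries.coeff_coe]
      simp
    rw [h1, hco n]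
    have hwR : (0:ℝ) < 2*(a:ℝ) + b4/2 + c4/2 := by
      have h2 : ((0:ℚ):ℝ) < ((2*(a:ℚ) + b4/2 + c4/2 : ℚ) : ℝ) := Rat.cast_lt.mpr hwq
      push_cast at h2
      exact h2
    rw [gamma_fact (2*(a:ℝ) + b4/2 + c4/2) hwR n, Cw]
    push_cast
    ring
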